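/- Let D be a Hom-finite k-linear triangulated category with a Serre functor, and C an admissible subcategory. Then both the right orthogonal C^⊥ = {X : Hom(C, X[n]) = 0 for all n} and the left orthogonal ^⊥C are admissible subcategories of D. -/

import Mathlib

open CategoryTheory CategoryTheory.Limits CategoryTheory.Pretriangulated

universe v u

variable (k : Type*) [Field k]

/-- A Serre functor on a Hom-finite `k`-linear category: an autoequivalence `E`
together with functorial isomorphisms `Hom(X, Y) ≅ (Hom(Y, E X))ᵛ`. -/
structure SerreFunctorData (C : Type u) [Category.{v} C] [Preadditive C] [Linear k C] where
  E : C ≌ C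
  pairing : ∀ X Y : C, (X ⟶ Y) ≃ₗ[k] Module.Dual k (Y ⟶ E.functor.obj X)
  naturality_right : ∀ {X Y Y' : C} (g : X ⟶ Y) (u : Y ⟶ Y') (h : Y' ⟶ E.functor.obj X),
    pairing X Y' (g ≫ u) h = pairing X Y g (u ≫ h)
  naturality_left : ∀ {X X' Y : C} (v : X' ⟶ X) (g : X ⟶ Y) (h : Y ⟶ E.functor.obj X'),
    pairing X' Y (v ≫ g) h = pairing X Y g (h ≫ E.functor.map v)

variable {C : Type u} [Category.{v} C] [Preadditive C] [Linear k C]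
  [HasZeroObject C] [HasShift C ℤ] [∀ n : ℤ, (shiftFunctor C n).Additive] [Pretriangulated C]
  [∀ X Y : C, FiniteDimensional k (X ⟶ Y)]

/-- The right orthogonal `P^⊥ = {X | Hom(Z, X[n]) = 0 for all Z ∈ P, n ∈ ℤ}`. -/
def RightOrthogonal (P : C → Prop) (X : C) : Prop :=
  ∀ Z : C, P Z → ∀ (n : ℤ) (f : Z ⟶ X⟦n⟧), f = 0

/-- The left orthogonal `^⊥P = {X | Hom(X, Z[n]) = 0 for all Z ∈ P, n ∈ ℤ}`. -/
def LeftOrthogonal (P : C → Prop) (X : C) : Prop :=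
  ∀ Z : C, P Z → ∀ (n : ℤ) (f : X ⟶ Z⟦n⟧), f = 0

section AuxOrthAdm

variable {k}
variable (d : SerreFunctorData k C)

set_option linter.unusedSectionVars false


section Helpers


lemma bij_conj {α β α' β' : Type*} (e1 : α ≃ α') (e2 : β ≃ β') (f : α → β) (f' : α' → β')
    (h : ∀ a : α, e2 (f a) = f' (e1 a)) : Function.Bijective f ↔ Function.Bijective f' := by
  have hf' : f' = ⇑e2 ∘ f ∘ ⇑e1.symm := by
    funext a'
    have := h (e1.symm a')
    simpa using this.symm
  constructor
  · intro hf
    rw [hf']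
    exact e2.bijective.comp (hf.comp e1.symm.bijective)
  · intro hf
    have : f = ⇑e2.symm ∘ f' ∘ ⇑e1 := by
      funext a; rw [hf']; simp
    rw [this]
    exact e2.symm.bijective.comp (hf.comp e1.bijective)

lemma bij_postcomp_iso {X Y Z : C} (g : Y ⟶ Z) [IsIso g] :
    Function.Bijective (fun t : X ⟶ Y => t ≫ g) := by
  constructor
  · intro a b hab
    simpa using hab =≫ inv g
  · intro u
    exact ⟨u ≫ inv g, by simp⟩

lemma bij_precomp_iso {X Y Z : C} (g : X ⟶ Y) [IsIso g] :
    Function.Bijective (fun t : Y ⟶ Z => g ≫ t) := by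
  constructor
  · intro a b hab
    simpa using inv g ≫= hab
  · intro u
    exact ⟨inv g ≫ u, by simp⟩

lemma allZero_iff_subsingleton [Preadditive C] (X Z : C) :
    (∀ f : X ⟶ Z, f = 0) ↔ Subsingleton (X ⟶ Z) := by
  constructor
  · intro h
    exact ⟨fun a b => by rw [h a, h b]⟩
  · intro h f
    exact Subsingleton.elim f 0

end Helpers

section Shifted


/-- the adjunction `⟦i⟧ ⊣ ⟦j⟧` when `i + j = 0` -/
noncomputable def adjShift (i j : ℤ) (hij : i + j = 0) :
    shiftFunctor C i ⊣ shiftFunctor C j :=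
  (shiftEquiv' C i j hij).toAdjunction

lemma bij_postcomp_shift {A X : C} (σ : A ⟶ X) (i j : ℤ) (hij : i + j = 0) (W : C) :
    Function.Bijective (fun t : W ⟶ A⟦i⟧ => t ≫ σ⟦i⟧') ↔
      Function.Bijective (fun t : W⟦j⟧ ⟶ A => t ≫ σ) :=
  (bij_conj ((adjShift j i (by omega)).homEquiv W A) ((adjShift j i (by omega)).homEquiv W X)
    _ _ (fun t => Adjunction.homEquiv_naturality_right _ t σ)).symm

lemma bij_precomp_shift {X B : C} (η : X ⟶ B) (i j : ℤ) (hij : i + j = 0) (Z : C) :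
    Function.Bijective (fun t : B⟦i⟧ ⟶ Z => η⟦i⟧' ≫ t) ↔
      Function.Bijective (fun t : B ⟶ Z⟦j⟧ => η ≫ t) :=
  bij_conj ((adjShift i j hij).homEquiv B Z) ((adjShift i j hij).homEquiv X Z)
    _ _ (fun t => Adjunction.homEquiv_naturality_left _ η t)

lemma allZero_shift (i j : ℤ) (hij : i + j = 0) (X Z : C) :
    (∀ f : X⟦i⟧ ⟶ Z, f = 0) ↔ (∀ f : X ⟶ Z⟦j⟧, f = 0) := by
  rw [allZero_iff_subsingleton, allZero_iff_subsingleton]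
  exact ⟨fun h => ((adjShift i j hij).homEquiv X Z).symm.subsingleton,
    fun h => ((adjShift i j hij).homEquiv X Z).subsingleton⟩

lemma allZero_iso_src {X X' Z : C} (e : X ≅ X') :
    (∀ f : X ⟶ Z, f = 0) ↔ (∀ f : X' ⟶ Z, f = 0) := by
  rw [allZero_iff_subsingleton, allZero_iff_subsingleton]
  constructor
  · intro h
    exact (Equiv.ofBijective _ (bij_precomp_iso (Z := Z) e.hom)).subsingleton
  · intro h
    exact (Equiv.ofBijective _ (bij_precomp_iso (Z := Z) e.inv)).subsingleton

lemma allZero_iso_tgt {X Z Z' : C} (e : Z ≅ Z') :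
    (∀ f : X ⟶ Z, f = 0) ↔ (∀ f : X ⟶ Z', f = 0) := by
  rw [allZero_iff_subsingleton, allZero_iff_subsingleton]
  constructor
  · intro h
    exact (Equiv.ofBijective _ (bij_postcomp_iso (X := X) e.inv)).subsingleton
  · intro h
    exact (Equiv.ofBijective _ (bij_postcomp_iso (X := X) e.hom)).subsingleton

end Shifted


section Serre


/-- `Φ_N : (N ⟶ S A') ≃ₗ Dual (A' ⟶ N)`, `Φ N h f = pairing A' N f h`. -/
noncomputable def serrePhi (A' N : C) :
    (N ⟶ d.E.functor.obj A') ≃ₗ[k] Module.Dual k (A' ⟶ N) :=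
  (Module.evalEquiv k (N ⟶ d.E.functor.obj A')).trans (d.pairing A' N).dualMap

lemma serrePhi_apply (A' N : C) (h : N ⟶ d.E.functor.obj A') (f : A' ⟶ N) :
    serrePhi d A' N h f = d.pairing A' N f h := rfl

/-- dualization of bijectivity, "right" naturality version. -/
lemma serre_bij (A' : C) {M M' : C} (u : M ⟶ M') :
    Function.Bijective (fun h : M' ⟶ d.E.functor.obj A' => u ≫ h) ↔
      Function.Bijective (fun f : A' ⟶ M => f ≫ u) := by
  have key : ∀ h : M' ⟶ d.E.functor.obj A',
      (serrePhi d A' M) (u ≫ h) =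
        (CategoryTheory.Linear.rightComp k A' u).dualMap ((serrePhi d A' M') h) := by
    intro h
    ext f
    simpa [serrePhi_apply, LinearMap.dualMap_apply'] using (d.naturality_right f u h).symm
  rw [bij_conj (serrePhi d A' M').toEquiv (serrePhi d A' M).toEquiv _
    (⇑(CategoryTheory.Linear.rightComp k A' u).dualMap) key]
  rw [LinearMap.dualMap_bijective_iff]
  rfl

/-- dualization of bijectivity, "left" naturality version. -/
lemma serre_bij_left (W : C) {N N' : C} (v : N ⟶ N') :
    Function.Bijective (fun h : W ⟶ d.E.functor.obj N => h ≫ d.E.functor.map v) ↔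
      Function.Bijective (fun g : N' ⟶ W => v ≫ g) := by
  have key : ∀ h : W ⟶ d.E.functor.obj N,
      (serrePhi d N' W) (h ≫ d.E.functor.map v) =
        (CategoryTheory.Linear.leftComp k W v).dualMap ((serrePhi d N W) h) := by
    intro h
    ext g
    simpa [serrePhi_apply, LinearMap.dualMap_apply'] using (d.naturality_left v g h).symm
  rw [bij_conj (serrePhi d N W).toEquiv (serrePhi d N' W).toEquiv _
    (⇑(CategoryTheory.Linear.leftComp k W v).dualMap) key]
  rw [LinearMap.dualMap_bijective_iff]
  rfl

lemma serre_allZero (U V : C) :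
    (∀ f : U ⟶ V, f = 0) ↔ (∀ g : V ⟶ d.E.functor.obj U, g = 0) := by
  rw [allZero_iff_subsingleton, allZero_iff_subsingleton]
  constructor
  · intro h
    haveI : Subsingleton (Module.Dual k (V ⟶ d.E.functor.obj U)) := (d.pairing U V).toEquiv.symm.subsingleton
    haveI : Subsingleton (Module.Dual k (Module.Dual k (V ⟶ d.E.functor.obj U))) :=
      ⟨fun a b => LinearMap.ext fun x => by rw [Subsingleton.elim x 0]; simp⟩
    exact (Module.evalEquiv k (V ⟶ d.E.functor.obj U)).toEquiv.subsingleton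
  · intro h
    haveI : Subsingleton (Module.Dual k (V ⟶ d.E.functor.obj U)) :=
      ⟨fun a b => LinearMap.ext fun x => by rw [Subsingleton.elim x 0]; simp⟩
    exact (d.pairing U V).toEquiv.subsingleton

end Serre

section Triang


lemma rightOrthogonal_of (P : C → Prop) (hshift : ∀ (X : C) (n : ℤ), P X → P (X⟦n⟧))
    {Y : C} (h : ∀ W, P W → ∀ f : W ⟶ Y, f = 0) : RightOrthogonal P Y := by
  intro Z hZ n f
  exact (allZero_shift (-n) n (by omega) Z Y).mp (h _ (hshift Z (-n) hZ)) f

lemma leftOrthogonal_of (P : C → Prop) (hshift : ∀ (X : C) (n : ℤ), P X → P (X⟦n⟧))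
    {Y : C} (h : ∀ W, P W → ∀ f : Y ⟶ W, f = 0) : LeftOrthogonal P Y :=
  fun Z hZ n f => h (Z⟦n⟧) (hshift Z n hZ) f

/-- Main construction 1: if every object has a "coreflection into P", then the inclusion of
the right orthogonal of `P` admits a left adjoint. -/
lemma L1 (P : C → Prop) (hshift : ∀ (X : C) (n : ℤ), P X → P (X⟦n⟧))
    (H : ∀ X : C, ∃ (A : C) (ε : A ⟶ X), P A ∧
      ∀ W, P W → Function.Bijective (fun h : W ⟶ A => h ≫ ε)) :
    (ObjectProperty.ι (RightOrthogonal P)).IsRightAdjoint := by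
  have key : ∀ X : C, ∃ (Y : ObjectProperty.FullSubcategory (RightOrthogonal P)) (p : X ⟶ Y.obj),
      ∀ Z : ObjectProperty.FullSubcategory (RightOrthogonal P),
        Function.Bijective (fun h : Y.obj ⟶ Z.obj => p ≫ h) := by
    intro X
    obtain ⟨A, ε, hA, hcoref⟩ := H X
    obtain ⟨Y, p, δ, hT⟩ := Pretriangulated.distinguished_cocone_triangle ε
    have hY : RightOrthogonal P Y := by
      apply rightOrthogonal_of P hshift
      intro W hW f
      -- f ≫ δ = 0
      have hinj : Function.Injective (fun h : W ⟶ A⟦(1:ℤ)⟧ => h ≫ ε⟦(1:ℤ)⟧') :=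
        ((bij_postcomp_shift ε 1 (-1) (by omega) W).mpr
          (hcoref (W⟦(-1:ℤ)⟧) (hshift W (-1) hW))).injective
      have h2 : f ≫ δ = 0 := by
        apply hinj
        have := comp_distTriang_mor_zero₃₁ _ hT
        dsimp at this ⊢
        rw [Category.assoc, show δ ≫ (shiftFunctor C 1).map ε = 0 from this, comp_zero, zero_comp]
      obtain ⟨w, hw⟩ := Pretriangulated.Triangle.coyoneda_exact₃ _ hT f h2
      obtain ⟨u, hu⟩ := (hcoref W hW).surjective w
      have hc := comp_distTriang_mor_zero₁₂ _ hT
      dsimp at hw hu hc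
      rw [hw, ← hu]
      change (u ≫ ε) ≫ p = 0
      rw [Category.assoc, show ε ≫ p = 0 from hc, comp_zero]
    refine ⟨⟨Y, hY⟩, p, fun Z => ⟨?_, ?_⟩⟩
    · -- injectivity
      intro h₁ h₂ hh
      dsimp at hh
      have hz : p ≫ (h₁ - h₂) = 0 := by rw [Preadditive.comp_sub, hh, sub_self]
      obtain ⟨t, ht⟩ := Pretriangulated.Triangle.yoneda_exact₃ _ hT (h₁ - h₂) hz
      have ht0 : t = 0 := by
        have hZ := Z.property (A⟦(1:ℤ)⟧) (hshift A 1 hA) 0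
          (t ≫ (shiftFunctorZero C ℤ).inv.app Z.obj)
        have := hZ =≫ (shiftFunctorZero C ℤ).hom.app Z.obj
        exact (cancel_mono ((shiftFunctorZero C ℤ).inv.app Z.obj)).mp (hZ.trans zero_comp.symm)
      dsimp at ht
      rw [ht0, comp_zero] at ht
      exact sub_eq_zero.mp ht
    · -- surjectivity
      intro f
      have hεf : ε ≫ f = 0 := by
        have hZ := Z.property A hA 0 ((ε ≫ f) ≫ (shiftFunctorZero C ℤ).inv.app Z.obj)
        have := hZ =≫ (shiftFunctorZero C ℤ).hom.app Z.obj
        simpa using this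
      obtain ⟨h, hh⟩ := Pretriangulated.Triangle.yoneda_exact₂ _ hT f hεf
      exact ⟨h, hh.symm⟩
  choose Yo po hbij using key
  have he : ∀ (X : C) (Z Z' : ObjectProperty.FullSubcategory (RightOrthogonal P)) (g : Z ⟶ Z')
      (h : Yo X ⟶ Z),
      ((ObjectProperty.fullyFaithfulι _).homEquiv.trans (Equiv.ofBijective _ (hbij X Z'))) (h ≫ g) =
        ((ObjectProperty.fullyFaithfulι _).homEquiv.trans (Equiv.ofBijective _ (hbij X Z))) h ≫ (ObjectProperty.ι (RightOrthogonal P)).map g := by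
    intro X Z Z' g h
    show po X ≫ (h ≫ g).hom = (po X ≫ h.hom) ≫ g.hom
    rw [ObjectProperty.FullSubcategory.comp_hom, Category.assoc]
  exact ⟨Adjunction.leftAdjointOfEquiv (fun X Z => (ObjectProperty.fullyFaithfulι _).homEquiv.trans (Equiv.ofBijective _ (hbij X Z))) he,
    ⟨Adjunction.adjunctionOfEquivLeft _ he⟩⟩

end Triang

section Triang2


/-- Main construction 2: if every object has a "reflection into P", then the inclusion of
the left orthogonal of `P` admits a right adjoint. -/
lemma L2 (P : C → Prop) (hshift : ∀ (X : C) (n : ℤ), P X → P (X⟦n⟧))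
    (H : ∀ X : C, ∃ (B : C) (η : X ⟶ B), P B ∧
      ∀ W, P W → Function.Bijective (fun h : B ⟶ W => η ≫ h)) :
    (ObjectProperty.ι (LeftOrthogonal P)).IsLeftAdjoint := by
  have key : ∀ X : C, ∃ (Y : ObjectProperty.FullSubcategory (LeftOrthogonal P)) (q : Y.obj ⟶ X),
      ∀ Z : ObjectProperty.FullSubcategory (LeftOrthogonal P),
        Function.Bijective (fun h : Z.obj ⟶ Y.obj => h ≫ q) := by
    intro X
    obtain ⟨B, η, hB, hrefl⟩ := H X
    obtain ⟨Y, q, δ, hT⟩ := Pretriangulated.distinguished_cocone_triangle₁ η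
    have hT' := inv_rot_of_distTriang _ hT
    have hY : LeftOrthogonal P Y := by
      apply leftOrthogonal_of P hshift
      intro W hW f
      have hinj : Function.Injective (fun t : B⟦(-1:ℤ)⟧ ⟶ W => η⟦(-1:ℤ)⟧' ≫ t) :=
        ((bij_precomp_shift η (-1) 1 (by omega) W).mpr
          (hrefl (W⟦(1:ℤ)⟧) (hshift W 1 hW))).injective
      have h23 : η ≫ δ = 0 := comp_distTriang_mor_zero₂₃ _ hT
      have h0 : (Triangle.mk q η δ).invRotate.mor₁ ≫ f = 0 := by
        dsimp [Triangle.invRotate, Triangle.mk]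
        simp only [Preadditive.neg_comp, neg_eq_zero, Category.assoc]
        apply hinj
        show (shiftFunctor C (-1)).map η ≫ _ = (shiftFunctor C (-1)).map η ≫ 0
        simp only [comp_zero, Preadditive.neg_comp, Preadditive.comp_neg, neg_eq_zero, ← Category.assoc,
          ← Functor.map_comp, h23, Functor.map_zero, zero_comp]
        erw [← Category.assoc, ← Functor.map_comp, h23, Functor.map_zero, zero_comp, zero_comp]
      obtain ⟨g, hg⟩ := Pretriangulated.Triangle.yoneda_exact₂ _ hT' f h0
      obtain ⟨u, hu⟩ := (hrefl W hW).surjective g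
      have hc12 : q ≫ η = 0 := comp_distTriang_mor_zero₁₂ _ hT
      dsimp at hg hu
      rw [hg, ← hu]
      change q ≫ η ≫ u = 0
      rw [← Category.assoc, hc12, zero_comp]
    refine ⟨⟨Y, hY⟩, q, fun Z => ⟨?_, ?_⟩⟩
    · intro m₁ m₂ hm
      dsimp at hm
      have hz : (m₁ - m₂) ≫ (Triangle.mk q η δ).invRotate.mor₂ = 0 := by
        dsimp [Triangle.invRotate, Triangle.mk]
        rw [Preadditive.sub_comp, hm, sub_self]
        rfl
      obtain ⟨g, hg⟩ := Pretriangulated.Triangle.coyoneda_exact₂ _ hT' (m₁ - m₂) hz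
      have hg0 : g = 0 := Z.property B hB (-1) g
      rw [hg0, zero_comp] at hg
      exact sub_eq_zero.mp hg
    · intro f
      have hfη : f ≫ η = 0 := by
        have hZ := Z.property B hB 0 ((f ≫ η) ≫ (shiftFunctorZero C ℤ).inv.app B)
        have := hZ =≫ (shiftFunctorZero C ℤ).hom.app B
        simpa using this
      obtain ⟨g, hg⟩ := Pretriangulated.Triangle.coyoneda_exact₂ _ hT f hfη
      exact ⟨g, hg.symm⟩
  choose Yo qo hbij using key
  have he : ∀ (Z' Z : ObjectProperty.FullSubcategory (LeftOrthogonal P)) (X : C) (f : Z' ⟶ Z)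
      (g : (ObjectProperty.ι (LeftOrthogonal P)).obj Z ⟶ X),
      ((ObjectProperty.fullyFaithfulι _).homEquiv.trans (Equiv.ofBijective _ (hbij X Z'))).symm
          ((ObjectProperty.ι (LeftOrthogonal P)).map f ≫ g) =
        f ≫ ((ObjectProperty.fullyFaithfulι _).homEquiv.trans (Equiv.ofBijective _ (hbij X Z))).symm g := by
    intro Z' Z X f g
    apply ((ObjectProperty.fullyFaithfulι _).homEquiv.trans (Equiv.ofBijective _ (hbij X Z'))).injective
    rw [Equiv.apply_symm_apply]
    have h2 := Equiv.apply_symm_apply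
      ((ObjectProperty.fullyFaithfulι (LeftOrthogonal P)).homEquiv.trans
        (Equiv.ofBijective _ (hbij X Z))) g
    have h3 : (((ObjectProperty.fullyFaithfulι (LeftOrthogonal P)).homEquiv.trans
        (Equiv.ofBijective _ (hbij X Z))).symm g).hom ≫ qo X = g := h2
    show _ = (f ≫ _).hom ≫ qo X
    rw [ObjectProperty.FullSubcategory.comp_hom, Category.assoc, h3]
    rfl
  have adj := Adjunction.adjunctionOfEquivRight
    (F := ObjectProperty.ι (LeftOrthogonal P)) (G_obj := Yo)
    (fun Z X => ((ObjectProperty.fullyFaithfulι _).homEquiv.trans (Equiv.ofBijective _ (hbij X Z))).symm) he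
  exact ⟨_, ⟨adj⟩⟩

end Triang2

section Parts12


lemma part1 (P : C → Prop) (hshift : ∀ (X : C) (n : ℤ), P X → P (X⟦n⟧))
    (hRadj : (ObjectProperty.ι P).IsLeftAdjoint) :
    (ObjectProperty.ι (RightOrthogonal P)).IsRightAdjoint := by
  apply L1 P hshift
  intro X
  have adj := Adjunction.ofIsLeftAdjoint (ObjectProperty.ι P)
  refine ⟨((ObjectProperty.ι P).rightAdjoint.obj X).obj, adj.counit.app X,
    ((ObjectProperty.ι P).rightAdjoint.obj X).property, ?_⟩
  intro W hW
  have heq : (fun h : W ⟶ ((ObjectProperty.ι P).rightAdjoint.obj X).obj =>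
      h ≫ adj.counit.app X) = fun h =>
        ((ObjectProperty.fullyFaithfulι P).homEquiv.symm.trans (adj.homEquiv ⟨W, hW⟩ X).symm) h := by
    funext h
    rw [Equiv.trans_apply, Adjunction.homEquiv_counit]
    rfl
  rw [heq]
  exact ((ObjectProperty.fullyFaithfulι P).homEquiv.symm.trans (adj.homEquiv ⟨W, hW⟩ X).symm).bijective

lemma part2 (P : C → Prop) (hshift : ∀ (X : C) (n : ℤ), P X → P (X⟦n⟧))
    (hLadj : (ObjectProperty.ι P).IsRightAdjoint) :
    (ObjectProperty.ι (LeftOrthogonal P)).IsLeftAdjoint := by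
  apply L2 P hshift
  intro X
  have adj := Adjunction.ofIsRightAdjoint (ObjectProperty.ι P)
  refine ⟨((ObjectProperty.ι P).leftAdjoint.obj X).obj, adj.unit.app X,
    ((ObjectProperty.ι P).leftAdjoint.obj X).property, ?_⟩
  intro W hW
  have heq : (fun h : ((ObjectProperty.ι P).leftAdjoint.obj X).obj ⟶ W =>
      adj.unit.app X ≫ h) = fun h =>
        ((ObjectProperty.fullyFaithfulι P).homEquiv.symm.trans (adj.homEquiv X ⟨W, hW⟩)) h := by
    funext h
    rw [Equiv.trans_apply, Adjunction.homEquiv_unit]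
    rfl
  rw [heq]
  exact ((ObjectProperty.fullyFaithfulι P).homEquiv.symm.trans (adj.homEquiv X ⟨W, hW⟩)).bijective

end Parts12

section Parts34


lemma part3 (d : SerreFunctorData k C) (P : C → Prop)
    (hshift : ∀ (X : C) (n : ℤ), P X → P (X⟦n⟧))
    (hLadj : (ObjectProperty.ι P).IsRightAdjoint) :
    (ObjectProperty.ι (RightOrthogonal P)).IsLeftAdjoint := by
  have hshiftQ : ∀ (Z : C) (n : ℤ),
      (∃ (A : C) (m : ℤ), P A ∧ Nonempty (Z ≅ (d.E.functor.obj A)⟦m⟧)) →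
      (∃ (A : C) (m : ℤ), P A ∧ Nonempty (Z⟦n⟧ ≅ (d.E.functor.obj A)⟦m⟧)) := by
    rintro Z n ⟨A, m, hA, ⟨e⟩⟩
    exact ⟨A, m + n, hA, ⟨(shiftFunctor C n).mapIso e ≪≫
      ((shiftFunctorAdd' C m n (m + n) rfl).app (d.E.functor.obj A)).symm⟩⟩
  have eq3 : RightOrthogonal P = LeftOrthogonal
      (fun Z => ∃ (A : C) (m : ℤ), P A ∧ Nonempty (Z ≅ (d.E.functor.obj A)⟦m⟧)) := by
    funext X
    apply propext
    constructor
    · intro hX Z hZ n f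
      obtain ⟨A, m, hA, ⟨e⟩⟩ := hZ
      have hz : ∀ g : X ⟶ (d.E.functor.obj A)⟦m + n⟧, g = 0 :=
        (allZero_shift (-(m + n)) (m + n) (by omega) X (d.E.functor.obj A)).mp
          ((serre_allZero d A ((shiftFunctor C (-(m + n))).obj X)).mp (hX A hA (-(m + n))))
      have e2 : Z⟦n⟧ ≅ (d.E.functor.obj A)⟦m + n⟧ := (shiftFunctor C n).mapIso e ≪≫
        ((shiftFunctorAdd' C m n (m + n) rfl).app (d.E.functor.obj A)).symm
      exact (allZero_iso_tgt e2).mpr hz f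
    · intro hX Z hZ n f
      have hQZ : ∃ (A : C) (m : ℤ), P A ∧
          Nonempty (d.E.functor.obj Z ≅ (d.E.functor.obj A)⟦m⟧) :=
        ⟨Z, 0, hZ, ⟨((shiftFunctorZero C ℤ).app (d.E.functor.obj Z)).symm⟩⟩
      have h2 : ∀ g : X⟦n⟧ ⟶ d.E.functor.obj Z, g = 0 :=
        (allZero_shift n (-n) (by omega) X (d.E.functor.obj Z)).mpr
          (hX (d.E.functor.obj Z) hQZ (-n))
      exact (serre_allZero d Z ((shiftFunctor C n).obj X)).mpr h2 f
  rw [eq3]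
  apply L2 _ hshiftQ
  intro X
  have adjL := Adjunction.ofIsRightAdjoint (ObjectProperty.ι P)
  refine ⟨d.E.functor.obj ((ObjectProperty.ι P).leftAdjoint.obj (d.E.inverse.obj X)).obj,
    d.E.counitIso.inv.app X ≫
      d.E.functor.map (adjL.unit.app (d.E.inverse.obj X)),
    ⟨((ObjectProperty.ι P).leftAdjoint.obj (d.E.inverse.obj X)).obj, 0,
      ((ObjectProperty.ι P).leftAdjoint.obj (d.E.inverse.obj X)).property,
      ⟨((shiftFunctorZero C ℤ).app _).symm⟩⟩, ?_⟩
  set A₀ : C := ((ObjectProperty.ι P).leftAdjoint.obj (d.E.inverse.obj X)).obj with hA₀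
  have hPA₀ : P A₀ := ((ObjectProperty.ι P).leftAdjoint.obj (d.E.inverse.obj X)).property
  have claim : ∀ W, P W → Function.Bijective (fun t : W ⟶ X =>
      t ≫ (d.E.counitIso.inv.app X ≫ d.E.functor.map (adjL.unit.app (d.E.inverse.obj X)))) := by
    intro W hW
    have hb1 : Function.Bijective
        (fun t : W ⟶ X => t ≫ d.E.counitIso.inv.app X) := bij_postcomp_iso _
    have hb2 : Function.Bijective
        (fun t : W ⟶ d.E.functor.obj (d.E.inverse.obj X) =>
          t ≫ d.E.functor.map (adjL.unit.app (d.E.inverse.obj X))) := by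
      have hunit : Function.Bijective
          (fun g : A₀ ⟶ W => adjL.unit.app (d.E.inverse.obj X) ≫ g) := by
        have heq : (fun g : A₀ ⟶ W => adjL.unit.app (d.E.inverse.obj X) ≫ g) =
            fun g => ((ObjectProperty.fullyFaithfulι P).homEquiv.symm.trans
              (adjL.homEquiv (d.E.inverse.obj X) ⟨W, hW⟩)) g := by
          funext g
          rw [Equiv.trans_apply, Adjunction.homEquiv_unit]
          rfl
        rw [heq]
        exact ((ObjectProperty.fullyFaithfulι P).homEquiv.symm.trans
          (adjL.homEquiv (d.E.inverse.obj X) ⟨W, hW⟩)).bijective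
      exact (serre_bij_left d W (adjL.unit.app (d.E.inverse.obj X))).mpr hunit
    have heq2 : (fun t : W ⟶ X =>
        t ≫ (d.E.counitIso.inv.app X ≫ d.E.functor.map (adjL.unit.app (d.E.inverse.obj X)))) =
        (fun t : W ⟶ d.E.functor.obj (d.E.inverse.obj X) =>
          t ≫ d.E.functor.map (adjL.unit.app (d.E.inverse.obj X))) ∘
          (fun t : W ⟶ X => t ≫ d.E.counitIso.inv.app X) := by
      funext t
      dsimp
      rw [Category.assoc]
    rw [heq2]
    exact hb2.comp hb1
  rintro W ⟨A', n, hA', ⟨w⟩⟩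
  refine (bij_conj (Equiv.ofBijective _ (bij_postcomp_iso (X := d.E.functor.obj A₀) w.hom))
    (Equiv.ofBijective _ (bij_postcomp_iso (X := X) w.hom))
    _ (fun t : d.E.functor.obj A₀ ⟶ (d.E.functor.obj A')⟦n⟧ =>
        (d.E.counitIso.inv.app X ≫ d.E.functor.map (adjL.unit.app (d.E.inverse.obj X))) ≫ t)
    (fun t => Category.assoc _ t w.hom)).mpr ?_
  refine (bij_precomp_shift _ (-n) n (by omega) (d.E.functor.obj A')).mp ?_
  refine (serre_bij d A' _).mpr ?_
  refine (bij_postcomp_shift _ (-n) n (by omega) A').mpr ?_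
  exact claim (A'⟦(n:ℤ)⟧) (hshift A' n hA')

end Parts34

section Part4


lemma part4 (d : SerreFunctorData k C) (P : C → Prop)
    (hshift : ∀ (X : C) (n : ℤ), P X → P (X⟦n⟧))
    (hRadj : (ObjectProperty.ι P).IsLeftAdjoint) :
    (ObjectProperty.ι (LeftOrthogonal P)).IsRightAdjoint := by
  have hshiftQ : ∀ (Z : C) (n : ℤ),
      (∃ (A : C) (m : ℤ), P A ∧ Nonempty (Z ≅ (d.E.inverse.obj A)⟦m⟧)) →
      (∃ (A : C) (m : ℤ), P A ∧ Nonempty (Z⟦n⟧ ≅ (d.E.inverse.obj A)⟦m⟧)) := by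
    rintro Z n ⟨A, m, hA, ⟨e⟩⟩
    exact ⟨A, m + n, hA, ⟨(shiftFunctor C n).mapIso e ≪≫
      ((shiftFunctorAdd' C m n (m + n) rfl).app (d.E.inverse.obj A)).symm⟩⟩
  have eq4 : LeftOrthogonal P = RightOrthogonal
      (fun Z => ∃ (A : C) (m : ℤ), P A ∧ Nonempty (Z ≅ (d.E.inverse.obj A)⟦m⟧)) := by
    funext X
    apply propext
    constructor
    · intro hX Z hZ n f
      obtain ⟨A, m, hA, ⟨e⟩⟩ := hZ
      have hz0 : ∀ g : X⟦n + -m⟧ ⟶ A, g = 0 :=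
        (allZero_shift (n + -m) (-(n + -m)) (by omega) X A).mpr (hX A hA (-(n + -m)))
      have hz1 : ∀ g : X⟦n + -m⟧ ⟶ d.E.functor.obj (d.E.inverse.obj A), g = 0 :=
        (allZero_iso_tgt (d.E.counitIso.app A)).mpr hz0
      have hz2 : ∀ g : d.E.inverse.obj A ⟶ X⟦n + -m⟧, g = 0 :=
        (serre_allZero d (d.E.inverse.obj A) ((shiftFunctor C (n + -m)).obj X)).mpr hz1
      have hz3 : ∀ g : d.E.inverse.obj A ⟶ X⟦n⟧⟦-m⟧, g = 0 :=
        (allZero_iso_tgt ((shiftFunctorAdd' C n (-m) (n + -m) rfl).app X)).mp hz2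
      have hz4 : ∀ g : (d.E.inverse.obj A)⟦m⟧ ⟶ X⟦n⟧, g = 0 :=
        (allZero_shift m (-m) (by omega) (d.E.inverse.obj A) ((shiftFunctor C n).obj X)).mpr hz3
      exact (allZero_iso_src e).mpr hz4 f
    · intro hX Z hZ n f
      have hQZ : ∃ (A : C) (m : ℤ), P A ∧
          Nonempty (d.E.inverse.obj Z ≅ (d.E.inverse.obj A)⟦m⟧) :=
        ⟨Z, 0, hZ, ⟨((shiftFunctorZero C ℤ).app (d.E.inverse.obj Z)).symm⟩⟩
      have hz0 : ∀ g : d.E.inverse.obj Z ⟶ X⟦-n⟧, g = 0 := hX (d.E.inverse.obj Z) hQZ (-n)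
      have hz1 : ∀ g : X⟦-n⟧ ⟶ d.E.functor.obj (d.E.inverse.obj Z), g = 0 :=
        (serre_allZero d (d.E.inverse.obj Z) ((shiftFunctor C (-n)).obj X)).mp hz0
      have hz2 : ∀ g : X⟦-n⟧ ⟶ Z, g = 0 :=
        (allZero_iso_tgt (d.E.counitIso.app Z)).mp hz1
      exact (allZero_shift (-n) n (by omega) X Z).mp hz2 f
  rw [eq4]
  apply L1 _ hshiftQ
  intro X
  have adjR := Adjunction.ofIsLeftAdjoint (ObjectProperty.ι P)
  refine ⟨d.E.inverse.obj
      ((ObjectProperty.ι P).rightAdjoint.obj (d.E.functor.obj X)).obj,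
    d.E.inverse.map (adjR.counit.app (d.E.functor.obj X)) ≫ d.E.unitIso.inv.app X,
    ⟨((ObjectProperty.ι P).rightAdjoint.obj (d.E.functor.obj X)).obj, 0,
      ((ObjectProperty.ι P).rightAdjoint.obj (d.E.functor.obj X)).property,
      ⟨((shiftFunctorZero C ℤ).app _).symm⟩⟩, ?_⟩
  have claim : ∀ W, P W → Function.Bijective (fun t : X ⟶ W =>
      (d.E.inverse.map (adjR.counit.app (d.E.functor.obj X)) ≫ d.E.unitIso.inv.app X) ≫ t) := by
    intro W hW
    have hb1 : Function.Bijective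
        (fun t : X ⟶ W => d.E.unitIso.inv.app X ≫ t) := bij_precomp_iso _
    have hb2 : Function.Bijective
        (fun t : d.E.inverse.obj (d.E.functor.obj X) ⟶ W =>
          d.E.inverse.map (adjR.counit.app (d.E.functor.obj X)) ≫ t) := by
      have hSv : d.E.functor.map (d.E.inverse.map (adjR.counit.app (d.E.functor.obj X))) =
          (d.E.counitIso.hom.app ((ObjectProperty.ι P).obj
              ((ObjectProperty.ι P).rightAdjoint.obj (d.E.functor.obj X))) ≫
            adjR.counit.app (d.E.functor.obj X)) ≫
            d.E.counitIso.inv.app (d.E.functor.obj X) := by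
        have hn := d.E.counitIso.hom.naturality (adjR.counit.app (d.E.functor.obj X))
        dsimp only [Functor.comp_obj, Functor.comp_map, Functor.id_obj, Functor.id_map] at hn
        rw [← hn, Category.assoc, Iso.hom_inv_id_app]
        exact (Category.comp_id _).symm
      have hSb : Function.Bijective (fun h : W ⟶ d.E.functor.obj (d.E.inverse.obj
          ((ObjectProperty.ι P).obj
            ((ObjectProperty.ι P).rightAdjoint.obj (d.E.functor.obj X)))) =>
          h ≫ d.E.functor.map (d.E.inverse.map (adjR.counit.app (d.E.functor.obj X)))) := by
        have hcε : Function.Bijective (fun h : W ⟶ ((ObjectProperty.ι P).obj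
            ((ObjectProperty.ι P).rightAdjoint.obj (d.E.functor.obj X))) =>
            h ≫ adjR.counit.app (d.E.functor.obj X)) := by
          have heq : (fun h : W ⟶ ((ObjectProperty.ι P).obj
              ((ObjectProperty.ι P).rightAdjoint.obj (d.E.functor.obj X))) =>
              h ≫ adjR.counit.app (d.E.functor.obj X)) =
              fun h => ((ObjectProperty.fullyFaithfulι P).homEquiv.symm.trans
                (adjR.homEquiv ⟨W, hW⟩ (d.E.functor.obj X)).symm) h := by
            funext h
            rw [Equiv.trans_apply, Adjunction.homEquiv_counit]
            rfl
          rw [heq]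
          exact ((ObjectProperty.fullyFaithfulι P).homEquiv.symm.trans
            (adjR.homEquiv ⟨W, hW⟩ (d.E.functor.obj X)).symm).bijective
        have heq2 : (fun h : W ⟶ d.E.functor.obj (d.E.inverse.obj
            ((ObjectProperty.ι P).obj
              ((ObjectProperty.ι P).rightAdjoint.obj (d.E.functor.obj X)))) =>
            h ≫ d.E.functor.map (d.E.inverse.map (adjR.counit.app (d.E.functor.obj X)))) =
            (fun h => h ≫ d.E.counitIso.inv.app (d.E.functor.obj X)) ∘
            (fun h => h ≫ adjR.counit.app (d.E.functor.obj X)) ∘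
            (fun h => h ≫ d.E.counitIso.hom.app ((ObjectProperty.ι P).obj
              ((ObjectProperty.ι P).rightAdjoint.obj (d.E.functor.obj X)))) := by
          funext h
          dsimp
          rw [hSv]
          simp only [Category.assoc]
          rfl
        rw [heq2]
        exact (bij_postcomp_iso _).comp (hcε.comp (bij_postcomp_iso _))
      exact (serre_bij_left d W
        (d.E.inverse.map (adjR.counit.app (d.E.functor.obj X)))).mp hSb
    have heq3 : (fun t : X ⟶ W =>
        (d.E.inverse.map (adjR.counit.app (d.E.functor.obj X)) ≫ d.E.unitIso.inv.app X) ≫ t) =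
        (fun t : d.E.inverse.obj (d.E.functor.obj X) ⟶ W =>
          d.E.inverse.map (adjR.counit.app (d.E.functor.obj X)) ≫ t) ∘
        (fun t : X ⟶ W => d.E.unitIso.inv.app X ≫ t) := by
      funext t
      dsimp
      rw [Category.assoc]
    rw [heq3]
    exact hb2.comp hb1
  rintro W ⟨A', n, hA', ⟨w⟩⟩
  refine (bij_conj
    (Equiv.ofBijective _ (bij_precomp_iso (Z := d.E.inverse.obj
      ((ObjectProperty.ι P).rightAdjoint.obj (d.E.functor.obj X)).obj) w.inv))
    (Equiv.ofBijective _ (bij_precomp_iso (Z := X) w.inv))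
    _ (fun t : (d.E.inverse.obj A')⟦n⟧ ⟶ d.E.inverse.obj
        ((ObjectProperty.ι P).rightAdjoint.obj (d.E.functor.obj X)).obj =>
        t ≫ (d.E.inverse.map (adjR.counit.app (d.E.functor.obj X)) ≫ d.E.unitIso.inv.app X))
    (fun t => (Category.assoc w.inv t _).symm)).mpr ?_
  refine (bij_postcomp_shift _ (-n) n (by omega) (d.E.inverse.obj A')).mp ?_
  refine (serre_bij d (d.E.inverse.obj A') _).mp ?_
  refine (bij_conj
    (Equiv.ofBijective _ (bij_postcomp_iso (X := (shiftFunctor C (-n)).obj X)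
      (d.E.counitIso.app A').hom))
    (Equiv.ofBijective _ (bij_postcomp_iso
      (X := (shiftFunctor C (-n)).obj (d.E.inverse.obj
        ((ObjectProperty.ι P).rightAdjoint.obj (d.E.functor.obj X)).obj))
      (d.E.counitIso.app A').hom))
    _ (fun h : (shiftFunctor C (-n)).obj X ⟶ A' =>
        (d.E.inverse.map (adjR.counit.app (d.E.functor.obj X)) ≫
          d.E.unitIso.inv.app X)⟦(-n : ℤ)⟧' ≫ h)
    (fun h => Category.assoc _ h (d.E.counitIso.app A').hom)).mpr ?_
  refine (bij_precomp_shift _ (-n) n (by omega) A').mpr ?_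
  exact claim (A'⟦(n:ℤ)⟧) (hshift A' n hA')

end Part4

end AuxOrthAdm

/-- Let `D` be a Hom-finite `k`-linear triangulated category with a Serre functor, and `C`
an admissible (strictly full triangulated) subcategory.  Then both the right orthogonal `C^⊥`
and the left orthogonal `^⊥C` are admissible subcategories of `D` (their inclusion functors
admit both a left adjoint and a right adjoint). -/
theorem orthogonals_admissible
    (hSerre : Nonempty (SerreFunctorData k C)) (P : C → Prop)
    (hiso : ∀ X Y : C, (X ≅ Y) → P X → P Y)
    (hshift : ∀ (X : C) (n : ℤ), P X → P (X⟦n⟧))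
    (htri : ∀ T : Pretriangulated.Triangle C, (T ∈ distTriang C) →
      P T.obj₁ → P T.obj₂ → P T.obj₃)
    (hLadj : (ObjectProperty.ι P).IsRightAdjoint)
    (hRadj : (ObjectProperty.ι P).IsLeftAdjoint) :
    ((ObjectProperty.ι (RightOrthogonal P)).IsRightAdjoint ∧
      (ObjectProperty.ι (RightOrthogonal P)).IsLeftAdjoint) ∧
    ((ObjectProperty.ι (LeftOrthogonal P)).IsRightAdjoint ∧
      (ObjectProperty.ι (LeftOrthogonal P)).IsLeftAdjoint) := by
  obtain ⟨d⟩ := hSerre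
  exact ⟨⟨part1 P hshift hRadj, part3 d P hshift hLadj⟩,
    ⟨part4 d P hshift hRadj, part2 P hshift hLadj⟩⟩
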